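/- An edge-disjoint path decomposition of the de Bruijn graph D(q,ℓ) into paths each of length n-ℓ+1 yields an optimal (n, 2(n-ℓ+1); q, ℓ)-*-gram reconstruction code of size q^ℓ/(n-ℓ+1): the words corresponding to the paths pairwise have disjoint sets of ℓ-grams, so the symmetric-difference distance between distinct codewords equals 2(n-ℓ+1), and no larger code with this distance exists. -/

import Mathlib

/-- The ℓ-gram of `x` starting at position `i`. -/
def gram (q ℓ : ℕ) (x : ℕ → Fin q) (i : ℕ) : Fin ℓ → Fin q := fun j => x (i + j)

/-- The set of ℓ-grams occurring in a word of length `n`. -/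
def suppGram (q ℓ n : ℕ) (x : ℕ → Fin q) : Set (Fin ℓ → Fin q) :=
  {z | ∃ i, i + ℓ ≤ n ∧ gram q ℓ x i = z}

/-- The distance `d*_gram(x,y)`. -/
noncomputable def dstar (q ℓ n : ℕ) (x y : ℕ → Fin q) : ℕ :=
  (symmDiff (suppGram q ℓ n x) (suppGram q ℓ n y)).ncard

lemma suppGram_eq_image (q ℓ n : ℕ) (hn : ℓ ≤ n) (x : ℕ → Fin q) :
    suppGram q ℓ n x = gram q ℓ x '' Set.Iic (n - ℓ) := by
  ext z
  simp only [suppGram, Set.mem_setOf_eq, Set.mem_image, Set.mem_Iic]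
  constructor
  · rintro ⟨i, h1, h2⟩; exact ⟨i, by omega, h2⟩
  · rintro ⟨i, h1, h2⟩; exact ⟨i, by omega, h2⟩

lemma ncard_Iic (a : ℕ) : (Set.Iic a).ncard = a + 1 := by
  rw [← Finset.coe_Iic, Set.ncard_coe_finset, Nat.card_Iic]

lemma suppGram_ncard_le (q ℓ n : ℕ) (hn : ℓ ≤ n) (x : ℕ → Fin q) :
    (suppGram q ℓ n x).ncard ≤ n - ℓ + 1 := by
  rw [suppGram_eq_image q ℓ n hn x]
  calc (gram q ℓ x '' Set.Iic (n - ℓ)).ncard ≤ (Set.Iic (n - ℓ)).ncard :=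
        Set.ncard_image_le (Set.finite_Iic _)
    _ = n - ℓ + 1 := ncard_Iic _

theorem path_decomposition_optimal_grc (q ℓ n : ℕ) (hℓ : 0 < ℓ) (hn : ℓ ≤ n)
    (C : Set (ℕ → Fin q))
    (hdecomp : ∀ z : Fin ℓ → Fin q,
      ∃! p : (ℕ → Fin q) × ℕ, p.1 ∈ C ∧ p.2 + ℓ ≤ n ∧ gram q ℓ p.1 p.2 = z) :
    (∀ x ∈ C, ∀ y ∈ C, x ≠ y → dstar q ℓ n x y = 2 * (n - ℓ + 1)) ∧
    C.ncard * (n - ℓ + 1) = q ^ ℓ ∧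
    ∀ C' : Set (ℕ → Fin q),
      (∀ x ∈ C', ∀ y ∈ C', x ≠ y → 2 * (n - ℓ + 1) ≤ dstar q ℓ n x y) →
      C'.ncard ≤ C.ncard := by
  classical
  set m := n - ℓ + 1 with hm
  -- disjointness of supports of distinct codewords
  have hdisj : ∀ x ∈ C, ∀ y ∈ C, x ≠ y →
      Disjoint (suppGram q ℓ n x) (suppGram q ℓ n y) := by
    intro x hx y hy hxy
    rw [Set.disjoint_left]
    rintro z ⟨i, hi, hgi⟩ ⟨j, hj, hgj⟩
    have h1 : ((x, i) : (ℕ → Fin q) × ℕ) = (y, j) :=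
      (hdecomp z).unique ⟨hx, hi, hgi⟩ ⟨hy, hj, hgj⟩
    exact hxy (congrArg Prod.fst h1)
  -- supports of codewords have exactly m elements
  have hcard : ∀ x ∈ C, (suppGram q ℓ n x).ncard = m := by
    intro x hx
    rw [suppGram_eq_image q ℓ n hn x]
    have hinj : Set.InjOn (gram q ℓ x) (Set.Iic (n - ℓ)) := by
      intro i hi j hj he
      have h1 : ((x, i) : (ℕ → Fin q) × ℕ) = (x, j) :=
        (hdecomp (gram q ℓ x j)).unique ⟨hx, by simp at hi; omega, he⟩
          ⟨hx, by simp at hj; omega, rfl⟩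
      exact congrArg Prod.snd h1
    rw [Set.ncard_image_of_injOn hinj, ncard_Iic]
  have hmpos : 0 < m := Nat.succ_pos _
  -- finiteness of C
  have hCfin : C.Finite := by
    have hinj : Set.InjOn (fun x => gram q ℓ x 0) C := by
      intro x hx y hy he
      have h1 : ((x, 0) : (ℕ → Fin q) × ℕ) = (y, 0) :=
        (hdecomp (gram q ℓ y 0)).unique ⟨hx, by omega, he⟩ ⟨hy, by omega, rfl⟩
      exact congrArg Prod.fst h1
    exact Set.Finite.of_finite_image (Set.toFinite _) hinj
  -- first part: distances
  have hdist : ∀ x ∈ C, ∀ y ∈ C, x ≠ y → dstar q ℓ n x y = 2 * m := by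
    intro x hx y hy hxy
    have hd := hdisj x hx y hy hxy
    unfold dstar
    rw [hd.symmDiff_eq_sup]
    have : (suppGram q ℓ n x ⊔ suppGram q ℓ n y).ncard
        = (suppGram q ℓ n x).ncard + (suppGram q ℓ n y).ncard :=
      Set.ncard_union_eq hd (Set.toFinite _) (Set.toFinite _)
    rw [this, hcard x hx, hcard y hy]; ring
  refine ⟨hdist, ?_⟩
  -- counting
  have hcount : ∀ (D : Set (ℕ → Fin q)) (hD : D.Finite)
        (hDd : ∀ x ∈ D, ∀ y ∈ D, x ≠ y →
          Disjoint (suppGram q ℓ n x) (suppGram q ℓ n y))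
        (hDc : ∀ x ∈ D, (suppGram q ℓ n x).ncard = m),
        (hD.toFinset.biUnion (fun x => (Set.toFinite (suppGram q ℓ n x)).toFinset)).card
          = D.ncard * m := by
      intro D hD hDd hDc
      rw [Finset.card_biUnion]
      · rw [Finset.sum_congr rfl (g := fun _ => m)]
        · rw [Finset.sum_const, smul_eq_mul, Set.ncard_eq_toFinset_card _ hD]
        · intro x hx
          rw [← Set.ncard_eq_toFinset_card]
          exact hDc x (hD.mem_toFinset.mp hx)
      · intro x hx y hy hxy
        rw [Function.onFun, Set.Finite.disjoint_toFinset]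
        exact hDd x (hD.mem_toFinset.mp hx) y (hD.mem_toFinset.mp hy) hxy
  have hprod : C.ncard * m = q ^ ℓ := by
    have hU : (hCfin.toFinset.biUnion
        (fun x => (Set.toFinite (suppGram q ℓ n x)).toFinset)) = Finset.univ := by
      apply Finset.eq_univ_iff_forall.mpr
      intro z
      obtain ⟨p, ⟨hp1, hp2, hp3⟩, -⟩ := hdecomp z
      rw [Finset.mem_biUnion]
      exact ⟨p.1, hCfin.mem_toFinset.mpr hp1,
        (Set.Finite.mem_toFinset _).mpr ⟨p.2, hp2, hp3⟩⟩
    have h1 := hcount C hCfin hdisj hcard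
    rw [hU, Finset.card_univ] at h1
    rw [← h1]
    simp
  refine ⟨hprod, ?_⟩
  intro C' hC'
  by_cases hC'fin : C'.Finite
  · by_cases h2 : 2 ≤ C'.ncard
    · have key : ∀ x ∈ C', ∀ y ∈ C', x ≠ y →
          (suppGram q ℓ n x).ncard = m ∧
          Disjoint (suppGram q ℓ n x) (suppGram q ℓ n y) := by
        intro x hx y hy hxy
        have hA := suppGram_ncard_le q ℓ n hn x
        have hB := suppGram_ncard_le q ℓ n hn y
        have hle := hC' x hx y hy hxy
        have hsub : dstar q ℓ n x y ≤ (suppGram q ℓ n x ∪ suppGram q ℓ n y).ncard :=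
          Set.ncard_le_ncard Set.symmDiff_subset_union (Set.toFinite _)
        have hadd : (suppGram q ℓ n x ∪ suppGram q ℓ n y).ncard +
            (suppGram q ℓ n x ∩ suppGram q ℓ n y).ncard
            = (suppGram q ℓ n x).ncard + (suppGram q ℓ n y).ncard :=
          Set.ncard_union_add_ncard_inter _ _ (Set.toFinite _) (Set.toFinite _)
        have hint0 : (suppGram q ℓ n x ∩ suppGram q ℓ n y).ncard = 0 := by omega
        have hcx : (suppGram q ℓ n x).ncard = m := by omega
        refine ⟨hcx, Set.disjoint_iff_inter_eq_empty.mpr ?_⟩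
        exact (Set.ncard_eq_zero (Set.toFinite _)).mp hint0
      have hC'disj : ∀ x ∈ C', ∀ y ∈ C', x ≠ y →
          Disjoint (suppGram q ℓ n x) (suppGram q ℓ n y) :=
        fun x hx y hy hxy => (key x hx y hy hxy).2
      have hC'card : ∀ x ∈ C', (suppGram q ℓ n x).ncard = m := by
        intro x hx
        obtain ⟨y, hy, hxy⟩ := Set.exists_ne_of_one_lt_ncard (s := C') (by omega) x
        exact (key x hx y hy (Ne.symm hxy)).1
      have h1 := hcount C' hC'fin hC'disj hC'card
      have h2' : C'.ncard * m ≤ q ^ ℓ := by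
        rw [← h1]
        calc _ ≤ Fintype.card (Fin ℓ → Fin q) := Finset.card_le_univ _
          _ = q ^ ℓ := by simp
      rw [← hprod] at h2'
      exact Nat.le_of_mul_le_mul_right h2' hmpos
    · rcases Set.eq_empty_or_nonempty C' with h | ⟨x, hx⟩
      · simp [h]
      · have hq : 0 < q := (x 0).pos
        have hz : ∃ p : (ℕ → Fin q) × ℕ, p.1 ∈ C ∧ p.2 + ℓ ≤ n ∧
            gram q ℓ p.1 p.2 = fun _ => ⟨0, hq⟩ := (hdecomp _).exists
        obtain ⟨p, hp1, -⟩ := hz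
        have hCpos : 0 < C.ncard := (Set.ncard_pos hCfin).mpr ⟨p.1, hp1⟩
        omega
  · rw [Set.Infinite.ncard hC'fin]
    exact Nat.zero_le _
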